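/- arXiv:2006.10903 — 6 statements merged into one kernel-verified Lean document; each statement's English description precedes it below -/
import Mathlib

section
/- Under partial PL and smoothness over disjoint blocks (Δ_i)_{i=1}^D partitioning [p] with parameters L_i ≥ μ_i ≥ 0, setting μ = Σμ_i and L = ΣL_i, running gradient descent with η ≤ 1/L from θ_0 yields ‖θ_{Δ_i,τ} − θ_{Δ_i,0}‖² ≤ 8 L_i L(θ_0)/μ² for all iterates τ ≥ 0 and all i. -/
/-- Gradient of `f : ℝ^p → ℝ` as the vector of partial derivatives. -/
noncomputable def grad {p : ℕ} (f : (Fin p → ℝ) → ℝ) (θ : Fin p → ℝ) : Fin p → ℝ :=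
  fun j => fderiv ℝ f θ (Pi.single j 1)

lemma fderiv_apply_eq_sum {p : ℕ} (f : (Fin p → ℝ) → ℝ) (y v : Fin p → ℝ) :
    fderiv ℝ f y v = ∑ j, v j * grad f y j := by
  have hv : v = ∑ j, (v j) • (Pi.single j 1 : Fin p → ℝ) := by
    ext k
    simp [Finset.sum_apply, Pi.single_apply]
  conv_lhs => rw [hv]
  rw [map_sum]
  simp [grad, smul_eq_mul]

lemma hasDerivAt_comp_line {p : ℕ} (f : (Fin p → ℝ) → ℝ) (hdiff : Differentiable ℝ f)
    (x v : Fin p → ℝ) (t : ℝ) :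
    HasDerivAt (fun s : ℝ => f (x + s • v)) (∑ j, v j * grad f (x + t • v) j) t := by
  have h1 : HasDerivAt (fun s : ℝ => x + s • v) v t := by
    simpa using ((hasDerivAt_id t).smul_const v).const_add x
  have h2 := (hdiff (x + t • v)).hasFDerivAt.comp_hasDerivAt t h1
  simp only [fderiv_apply_eq_sum f] at h2
  exact h2

lemma sqrt_sum_sq_add {ι : Type*} (S : Finset ι) (a b : ι → ℝ) :
    Real.sqrt (∑ j ∈ S, (a j + b j) ^ 2) ≤
      Real.sqrt (∑ j ∈ S, a j ^ 2) + Real.sqrt (∑ j ∈ S, b j ^ 2) := by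
  set A := Real.sqrt (∑ j ∈ S, a j ^ 2) with hA
  set B := Real.sqrt (∑ j ∈ S, b j ^ 2) with hB
  have hA0 : 0 ≤ A := Real.sqrt_nonneg _
  have hB0 : 0 ≤ B := Real.sqrt_nonneg _
  have hA2 : A ^ 2 = ∑ j ∈ S, a j ^ 2 := Real.sq_sqrt (Finset.sum_nonneg fun _ _ => sq_nonneg _)
  have hB2 : B ^ 2 = ∑ j ∈ S, b j ^ 2 := Real.sq_sqrt (Finset.sum_nonneg fun _ _ => sq_nonneg _)
  have hcs : (∑ j ∈ S, a j * b j) ≤ A * B := by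
    have h1 := Finset.sum_mul_sq_le_sq_mul_sq S a b
    have h2 : (∑ j ∈ S, a j * b j) ≤ |∑ j ∈ S, a j * b j| := le_abs_self _
    have h3 : |∑ j ∈ S, a j * b j| = Real.sqrt ((∑ j ∈ S, a j * b j) ^ 2) :=
      (Real.sqrt_sq_eq_abs _).symm
    calc (∑ j ∈ S, a j * b j) ≤ Real.sqrt ((∑ j ∈ S, a j * b j) ^ 2) := by rw [← h3]; exact h2
      _ ≤ Real.sqrt ((A * B) ^ 2) := by
          apply Real.sqrt_le_sqrt
          calc (∑ j ∈ S, a j * b j) ^ 2 ≤ (∑ j ∈ S, a j ^ 2) * ∑ j ∈ S, b j ^ 2 := h1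
            _ = (A * B) ^ 2 := by rw [mul_pow, hA2, hB2]
      _ = A * B := by rw [Real.sqrt_sq (mul_nonneg hA0 hB0)]
  have key : ∑ j ∈ S, (a j + b j) ^ 2 ≤ (A + B) ^ 2 := by
    have : ∑ j ∈ S, (a j + b j) ^ 2 = (∑ j ∈ S, a j ^ 2) + 2 * (∑ j ∈ S, a j * b j) + ∑ j ∈ S, b j ^ 2 := by
      rw [Finset.mul_sum, ← Finset.sum_add_distrib, ← Finset.sum_add_distrib]
      exact Finset.sum_congr rfl fun j _ => by ring
    nlinarith [hcs]
  calc Real.sqrt (∑ j ∈ S, (a j + b j) ^ 2) ≤ Real.sqrt ((A + B) ^ 2) := Real.sqrt_le_sqrt key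
    _ = A + B := Real.sqrt_sq (by positivity)

lemma taylor_bound {p : ℕ} (f : (Fin p → ℝ) → ℝ) (hdiff : Differentiable ℝ f)
    (S : Finset (Fin p)) (x v : Fin p → ℝ) (hsupp : ∀ j ∉ S, v j = 0)
    (K : ℝ) (hK : 0 ≤ K)
    (hlip : ∀ t ∈ Set.Icc (0:ℝ) 1,
      ∑ j ∈ S, (grad f (x + t • v) j - grad f x j) ^ 2 ≤ K ^ 2 * t ^ 2 * ∑ j ∈ S, v j ^ 2) :
    f (x + v) ≤ f x + (∑ j ∈ S, grad f x j * v j) + K / 2 * ∑ j ∈ S, v j ^ 2 := by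
  set V := ∑ j ∈ S, v j ^ 2 with hV
  have hV0 : 0 ≤ V := Finset.sum_nonneg fun _ _ => sq_nonneg _
  set c := ∑ j ∈ S, grad f x j * v j with hc
  have hsum : ∀ y : Fin p → ℝ, ∑ j, v j * grad f y j = ∑ j ∈ S, grad f y j * v j := by
    intro y
    rw [← Finset.sum_subset (Finset.subset_univ S)
      (fun j _ hj => by rw [hsupp j hj, zero_mul])]
    exact Finset.sum_congr rfl fun j _ => mul_comm _ _
  set ψ : ℝ → ℝ := fun t => f (x + t • v) - t * c - K * V / 2 * t ^ 2 with hψ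
  have hψd : ∀ t : ℝ, HasDerivAt ψ
      ((∑ j ∈ S, grad f (x + t • v) j * v j) - c - K * V * t) t := by
    intro t
    have h1 := hasDerivAt_comp_line f hdiff x v t
    rw [hsum] at h1
    have h2 : HasDerivAt (fun t : ℝ => t * c) c t := by
      simpa using (hasDerivAt_id t).mul_const c
    have h3 : HasDerivAt (fun t : ℝ => K * V / 2 * t ^ 2) (K * V * t) t := by
      have := ((hasDerivAt_pow 2 t).const_mul (K * V / 2))
      simpa using this.congr_deriv (by ring)
    exact (h1.sub h2).sub h3
  have hmono : AntitoneOn ψ (Set.Icc 0 1) := by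
    apply antitoneOn_of_deriv_nonpos (convex_Icc 0 1)
    · exact fun t _ => ((hψd t).continuousAt).continuousWithinAt
    · intro t _
      exact ((hψd t).differentiableAt).differentiableWithinAt
    · intro t ht
      rw [interior_Icc] at ht
      rw [(hψd t).deriv]
      have ht0 : 0 ≤ t := le_of_lt ht.1
      have ht1 : t ≤ 1 := le_of_lt ht.2
      -- Cauchy-Schwarz bound
      have hdv : (∑ j ∈ S, grad f (x + t • v) j * v j) - c ≤ K * t * V := by
        have heq : (∑ j ∈ S, grad f (x + t • v) j * v j) - c
            = ∑ j ∈ S, (grad f (x + t • v) j - grad f x j) * v j := by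
          rw [hc, ← Finset.sum_sub_distrib]
          exact Finset.sum_congr rfl fun j _ => by ring
        rw [heq]
        have hcs := Finset.sum_mul_sq_le_sq_mul_sq S
          (fun j => grad f (x + t • v) j - grad f x j) v
        have hb := hlip t ⟨ht0, ht1⟩
        have hsq : (∑ j ∈ S, (grad f (x + t • v) j - grad f x j) * v j) ^ 2
            ≤ (K * t * V) ^ 2 := by nlinarith [hV0]
        calc (∑ j ∈ S, (grad f (x + t • v) j - grad f x j) * v j)
            ≤ |∑ j ∈ S, (grad f (x + t • v) j - grad f x j) * v j| := le_abs_self _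
          _ = Real.sqrt ((∑ j ∈ S, (grad f (x + t • v) j - grad f x j) * v j) ^ 2) :=
              (Real.sqrt_sq_eq_abs _).symm
          _ ≤ Real.sqrt ((K * t * V) ^ 2) := Real.sqrt_le_sqrt hsq
          _ = K * t * V := Real.sqrt_sq (by positivity)
      nlinarith [hdv]
  have h01 : ψ 1 ≤ ψ 0 := hmono (Set.left_mem_Icc.2 zero_le_one)
    (Set.right_mem_Icc.2 zero_le_one) zero_le_one
  simp only [hψ, one_smul, zero_smul, add_zero] at h01
  nlinarith [h01]

/-- Under partial PL and smoothness over disjoint blocks partitioning `[p]`, gradient descent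
with step size `η ≤ 1/L` keeps every block close to initialization:
`‖θ_{Δ i, τ} - θ_{Δ i, 0}‖² ≤ 8 Lᵢ f(θ₀) / μ²`. -/
theorem block_distance_bound {p D : ℕ} (f : (Fin p → ℝ) → ℝ)
    (hdiff : Differentiable ℝ f)
    (hmin : ∀ θ, 0 ≤ f θ) (hattain : ∃ θ, f θ = 0)
    (Δ : Fin D → Finset (Fin p))
    (hdisj : ∀ i j, i ≠ j → Disjoint (Δ i) (Δ j))
    (hcover : ∀ k : Fin p, ∃ i, k ∈ Δ i)
    (μ Li : Fin D → ℝ)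
    (horder : ∀ i, 0 ≤ μ i ∧ μ i ≤ Li i)
    (hμpos : 0 < ∑ i', μ i')
    (hPPL : ∀ i θ, 2 * μ i * f θ ≤ ∑ j ∈ Δ i, (grad f θ j) ^ 2)
    (hPLip : ∀ i (θ θ' : Fin p → ℝ), (∀ j ∉ Δ i, θ j = θ' j) →
      ∑ j ∈ Δ i, (grad f θ j - grad f θ' j) ^ 2 ≤ (Li i) ^ 2 * ∑ j ∈ Δ i, (θ j - θ' j) ^ 2)
    (hLip : ∀ θ θ' : Fin p → ℝ,
      ∑ j, (grad f θ j - grad f θ' j) ^ 2 ≤ (∑ i', Li i') ^ 2 * ∑ j, (θ j - θ' j) ^ 2)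
    (hPL : ∀ θ, 2 * (∑ i', μ i') * f θ ≤ ∑ j, (grad f θ j) ^ 2)
    (η : ℝ) (hηpos : 0 < η) (hη : η ≤ 1 / ∑ i', Li i')
    (θ : ℕ → Fin p → ℝ)
    (hgd : ∀ τ, θ (τ + 1) = fun j => θ τ j - η * grad f (θ τ) j)
    (τ : ℕ) (i : Fin D) :
    ∑ j ∈ Δ i, (θ τ j - θ 0 j) ^ 2 ≤ 8 * Li i * f (θ 0) / (∑ i', μ i') ^ 2 := by
  set μs := ∑ i', μ i' with hμs
  set Ls := ∑ i', Li i' with hLs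
  have hμLs : μs ≤ Ls := Finset.sum_le_sum fun i _ => (horder i).2
  have hLspos : 0 < Ls := lt_of_lt_of_le hμpos hμLs
  have hηL : η * Ls ≤ 1 := by
    have := (le_div_iff₀ hLspos).1 hη
    linarith
  have hLi0 : ∀ i, 0 ≤ Li i := fun i => le_trans (horder i).1 (horder i).2
  -- Step 1: block gradient bound  ∑_{Δ i} g² ≤ 2 Lᵢ f
  have hblock : ∀ (i : Fin D) (y : Fin p → ℝ),
      ∑ j ∈ Δ i, (grad f y j) ^ 2 ≤ 2 * Li i * f y := by
    intro i y
    set G := ∑ j ∈ Δ i, (grad f y j) ^ 2 with hG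
    have hG0 : 0 ≤ G := Finset.sum_nonneg fun _ _ => sq_nonneg _
    have key : ∀ t : ℝ, 0 ≤ t → 0 ≤ f y - t * G + Li i / 2 * (t ^ 2 * G) := by
      intro t ht
      set v : Fin p → ℝ := fun j => if j ∈ Δ i then -(t * grad f y j) else 0 with hv
      have hsupp : ∀ j ∉ Δ i, v j = 0 := fun j hj => by simp [hv, hj]
      have hVsum : ∑ j ∈ Δ i, v j ^ 2 = t ^ 2 * G := by
        rw [hG, Finset.mul_sum]
        refine Finset.sum_congr rfl fun j hj => ?_
        simp only [hv, if_pos hj]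
        ring
      have hcsum : ∑ j ∈ Δ i, grad f y j * v j = -(t * G) := by
        have h1 : ∀ j ∈ Δ i, grad f y j * v j = -(t * grad f y j ^ 2) := by
          intro j hj; simp only [hv, if_pos hj]; ring
        rw [Finset.sum_congr rfl h1, Finset.sum_neg_distrib, ← Finset.mul_sum, hG]
      have hlip : ∀ s ∈ Set.Icc (0:ℝ) 1,
          ∑ j ∈ Δ i, (grad f (y + s • v) j - grad f y j) ^ 2
            ≤ (Li i) ^ 2 * s ^ 2 * ∑ j ∈ Δ i, v j ^ 2 := by
        intro s _
        have h1 := hPLip i (y + s • v) y (fun j hj => by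
          simp [hsupp j hj])
        have h2 : ∑ j ∈ Δ i, ((y + s • v) j - y j) ^ 2 = s ^ 2 * ∑ j ∈ Δ i, v j ^ 2 := by
          rw [Finset.mul_sum]
          refine Finset.sum_congr rfl fun j _ => ?_
          simp only [Pi.add_apply, Pi.smul_apply, smul_eq_mul]
          ring
        calc ∑ j ∈ Δ i, (grad f (y + s • v) j - grad f y j) ^ 2
            ≤ (Li i) ^ 2 * (s ^ 2 * ∑ j ∈ Δ i, v j ^ 2) := by rw [← h2]; exact h1
          _ = (Li i) ^ 2 * s ^ 2 * ∑ j ∈ Δ i, v j ^ 2 := by ring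
      have htb := taylor_bound f hdiff (Δ i) y v hsupp (Li i) (hLi0 i) hlip
      rw [hVsum, hcsum] at htb
      have := hmin (y + v)
      nlinarith [this, htb]
    rcases lt_or_eq_of_le (hLi0 i) with hL | hL
    · have hk := key (1 / Li i) (by positivity)
      have h2 : f y - (1 / Li i) * G + Li i / 2 * ((1 / Li i) ^ 2 * G)
          = f y - G / (2 * Li i) := by
        field_simp
        ring
      rw [h2] at hk
      have h4 : G / (2 * Li i) ≤ f y := by linarith
      have h5 := (div_le_iff₀ (by positivity : (0:ℝ) < 2 * Li i)).1 h4
      linarith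
    · by_contra hcon
      push_neg at hcon
      have hGpos : 0 < G := by nlinarith [hmin y]
      have hk := key ((f y + 1) / G) (le_of_lt (div_pos (by linarith [hmin y]) hGpos))
      rw [← hL] at hk
      have h6 : (f y + 1) / G * G = f y + 1 := div_mul_cancel₀ _ (ne_of_gt hGpos)
      nlinarith [hk, h6]
  -- Step 2: descent
  have hdescent : ∀ t : ℕ, f (θ (t + 1)) ≤ (1 - η * μs) * f (θ t) := by
    intro t
    set g : Fin p → ℝ := grad f (θ t) with hg
    set v : Fin p → ℝ := fun j => -(η * g j) with hv
    have hθ : θ (t + 1) = θ t + v := by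
      rw [hgd t]; funext j; simp only [hv, Pi.add_apply]; ring
    have hgsq0 : 0 ≤ ∑ j, g j ^ 2 := Finset.sum_nonneg fun _ _ => sq_nonneg _
    have hlip : ∀ s ∈ Set.Icc (0:ℝ) 1,
        ∑ j, (grad f (θ t + s • v) j - grad f (θ t) j) ^ 2
          ≤ Ls ^ 2 * s ^ 2 * ∑ j, v j ^ 2 := by
      intro s _
      have h1 := hLip (θ t + s • v) (θ t)
      have h2 : ∑ j, ((θ t + s • v) j - θ t j) ^ 2 = s ^ 2 * ∑ j, v j ^ 2 := by
        rw [Finset.mul_sum]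
        refine Finset.sum_congr rfl fun j _ => ?_
        simp only [Pi.add_apply, Pi.smul_apply, smul_eq_mul]
        ring
      calc ∑ j, (grad f (θ t + s • v) j - grad f (θ t) j) ^ 2
          ≤ Ls ^ 2 * (s ^ 2 * ∑ j, v j ^ 2) := by rw [← h2]; exact h1
        _ = Ls ^ 2 * s ^ 2 * ∑ j, v j ^ 2 := by ring
    have htb := taylor_bound f hdiff Finset.univ (θ t) v
      (fun j hj => absurd (Finset.mem_univ j) hj) Ls hLspos.le hlip
    have hA : ∑ j, g j * v j = -(η * ∑ j, g j ^ 2) := by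
      have h1 : ∀ j ∈ Finset.univ, g j * v j = -(η * g j ^ 2) := by
        intro j _; simp only [hv]; ring
      rw [Finset.sum_congr rfl h1, Finset.sum_neg_distrib, ← Finset.mul_sum]
    have hB : ∑ j, v j ^ 2 = η ^ 2 * ∑ j, g j ^ 2 := by
      rw [Finset.mul_sum]
      refine Finset.sum_congr rfl fun j _ => ?_
      simp only [hv]; ring
    rw [hA, hB] at htb
    rw [hθ]
    have h5 : Ls / 2 * (η ^ 2 * ∑ j, g j ^ 2) ≤ η / 2 * ∑ j, g j ^ 2 := by
      nlinarith [mul_nonneg hηpos.le hgsq0, hηL]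
    have h6 := hPL (θ t)
    nlinarith [mul_le_mul_of_nonneg_left h6 (le_of_lt (half_pos hηpos))]
  -- Step 3: decay
  have hημ1 : η * μs ≤ 1 := le_trans (by nlinarith) hηL
  set r := 1 - η * μs with hr
  have hr0 : 0 ≤ r := by simp only [hr]; linarith
  have hr1 : r < 1 := by simp only [hr]; nlinarith
  have hdecay : ∀ t : ℕ, f (θ t) ≤ r ^ t * f (θ 0) := by
    intro t
    induction t with
    | zero => simp
    | succ t ih =>
      calc f (θ (t + 1)) ≤ r * f (θ t) := hdescent t
        _ ≤ r * (r ^ t * f (θ 0)) := mul_le_mul_of_nonneg_left ih hr0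
        _ = r ^ (t + 1) * f (θ 0) := by ring
  -- Step 4: displacement bound
  set ρ := Real.sqrt r with hρ
  have hρ0 : 0 ≤ ρ := Real.sqrt_nonneg r
  have hρ1 : ρ < 1 := by nlinarith [Real.sq_sqrt hr0, Real.sqrt_nonneg r]
  have hρpow : ∀ t : ℕ, Real.sqrt (r ^ t) = ρ ^ t := by
    intro t
    induction t with
    | zero => simp
    | succ t ih =>
      rw [pow_succ, pow_succ, Real.sqrt_mul (pow_nonneg hr0 t), ih]
  set C := Real.sqrt (2 * Li i * f (θ 0)) with hC
  have hC0 : 0 ≤ C := Real.sqrt_nonneg _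
  have hCf : 0 ≤ 2 * Li i * f (θ 0) :=
    mul_nonneg (mul_nonneg (by norm_num) (hLi0 i)) (hmin _)
  have hC2 : C ^ 2 = 2 * Li i * f (θ 0) := Real.sq_sqrt hCf
  have hgradbd : ∀ t : ℕ, Real.sqrt (∑ j ∈ Δ i, grad f (θ t) j ^ 2) ≤ C * ρ ^ t := by
    intro t
    have h1 : ∑ j ∈ Δ i, grad f (θ t) j ^ 2 ≤ 2 * Li i * f (θ 0) * r ^ t := by
      have := mul_le_mul_of_nonneg_left (hdecay t)
        (by nlinarith [hLi0 i] : (0:ℝ) ≤ 2 * Li i)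
      calc ∑ j ∈ Δ i, grad f (θ t) j ^ 2 ≤ 2 * Li i * f (θ t) := hblock i (θ t)
        _ ≤ 2 * Li i * (r ^ t * f (θ 0)) := this
        _ = 2 * Li i * f (θ 0) * r ^ t := by ring
    calc Real.sqrt (∑ j ∈ Δ i, grad f (θ t) j ^ 2)
        ≤ Real.sqrt (2 * Li i * f (θ 0) * r ^ t) := Real.sqrt_le_sqrt h1
      _ = C * ρ ^ t := by rw [Real.sqrt_mul hCf, hρpow t]
  have hdisp : ∀ t : ℕ, Real.sqrt (∑ j ∈ Δ i, (θ t j - θ 0 j) ^ 2)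
      ≤ η * C * ∑ s ∈ Finset.range t, ρ ^ s := by
    intro t
    induction t with
    | zero => simp
    | succ t ih =>
      have hsplit : ∀ j, θ (t + 1) j - θ 0 j
          = (θ t j - θ 0 j) + (-(η * grad f (θ t) j)) := by
        intro j; rw [hgd t]; ring
      have htri := sqrt_sum_sq_add (Δ i) (fun j => θ t j - θ 0 j)
        (fun j => -(η * grad f (θ t) j))
      have hL2 : ∑ j ∈ Δ i, (θ (t + 1) j - θ 0 j) ^ 2
          = ∑ j ∈ Δ i, ((θ t j - θ 0 j) + (-(η * grad f (θ t) j))) ^ 2 :=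
        Finset.sum_congr rfl fun j _ => by rw [hsplit j]
      have hb : Real.sqrt (∑ j ∈ Δ i, (-(η * grad f (θ t) j)) ^ 2) ≤ η * (C * ρ ^ t) := by
        have heq : ∑ j ∈ Δ i, (-(η * grad f (θ t) j)) ^ 2
            = η ^ 2 * ∑ j ∈ Δ i, grad f (θ t) j ^ 2 := by
          rw [Finset.mul_sum]
          exact Finset.sum_congr rfl fun j _ => by ring
        rw [heq, Real.sqrt_mul (by positivity), Real.sqrt_sq hηpos.le]
        exact mul_le_mul_of_nonneg_left (hgradbd t) hηpos.le
      calc Real.sqrt (∑ j ∈ Δ i, (θ (t + 1) j - θ 0 j) ^ 2)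
          = Real.sqrt (∑ j ∈ Δ i, ((θ t j - θ 0 j) + (-(η * grad f (θ t) j))) ^ 2) := by
            rw [hL2]
        _ ≤ Real.sqrt (∑ j ∈ Δ i, (θ t j - θ 0 j) ^ 2)
              + Real.sqrt (∑ j ∈ Δ i, (-(η * grad f (θ t) j)) ^ 2) := htri
        _ ≤ η * C * ∑ s ∈ Finset.range t, ρ ^ s + η * (C * ρ ^ t) := add_le_add ih hb
        _ = η * C * ∑ s ∈ Finset.range (t + 1), ρ ^ s := by
            rw [Finset.sum_range_succ]; ring
  -- Step 5: geometric sum bound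
  have hρle : ρ ≤ 1 - η * μs / 2 := by
    have h3 : r ≤ (1 - η * μs / 2) ^ 2 := by nlinarith [sq_nonneg (η * μs)]
    calc ρ = Real.sqrt r := rfl
      _ ≤ Real.sqrt ((1 - η * μs / 2) ^ 2) := Real.sqrt_le_sqrt h3
      _ = 1 - η * μs / 2 := Real.sqrt_sq (by linarith)
  have h1ρ : η * μs / 2 ≤ 1 - ρ := by linarith
  have hρlt1 : 0 < 1 - ρ := lt_of_lt_of_le (by positivity) h1ρ
  have hgeo : ∀ t : ℕ, ∑ s ∈ Finset.range t, ρ ^ s ≤ 1 / (1 - ρ) := by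
    intro t
    rw [geom_sum_eq (ne_of_lt hρ1) t]
    have h7 : (ρ ^ t - 1) / (ρ - 1) = (1 - ρ ^ t) / (1 - ρ) := by
      rw [div_eq_div_iff (ne_of_lt (by linarith : ρ - 1 < 0)) (ne_of_gt hρlt1)]; ring
    rw [h7, div_le_div_iff₀ hρlt1 hρlt1]
    nlinarith [pow_nonneg hρ0 t]
  -- conclude
  have hDτ : Real.sqrt (∑ j ∈ Δ i, (θ τ j - θ 0 j) ^ 2) ≤ 2 * C / μs := by
    calc Real.sqrt (∑ j ∈ Δ i, (θ τ j - θ 0 j) ^ 2)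
        ≤ η * C * ∑ s ∈ Finset.range τ, ρ ^ s := hdisp τ
      _ ≤ η * C * (1 / (1 - ρ)) := mul_le_mul_of_nonneg_left (hgeo τ) (by positivity)
      _ ≤ η * C * (1 / (η * μs / 2)) := by
          apply mul_le_mul_of_nonneg_left _ (by positivity)
          exact one_div_le_one_div_of_le (by positivity) h1ρ
      _ = 2 * C / μs := by field_simp
  have hsum0 : 0 ≤ ∑ j ∈ Δ i, (θ τ j - θ 0 j) ^ 2 :=
    Finset.sum_nonneg fun _ _ => sq_nonneg _
  calc ∑ j ∈ Δ i, (θ τ j - θ 0 j) ^ 2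
      = Real.sqrt (∑ j ∈ Δ i, (θ τ j - θ 0 j) ^ 2) ^ 2 := (Real.sq_sqrt hsum0).symm
    _ ≤ (2 * C / μs) ^ 2 := pow_le_pow_left₀ (Real.sqrt_nonneg _) hDτ 2
    _ = 8 * Li i * f (θ 0) / μs ^ 2 := by
        rw [div_pow, mul_pow, hC2]; ring
end

section
/- Consider the least-squares loss L(θ) = ½‖y − Σ_{i=1}^D X_i θ_i‖² over blocks θ = (θ_1,…,θ_D) with X_i ∈ R^{n×p_i}, p_i ≥ n, each X_i full row rank. The minimum Euclidean norm interpolating solution θ* = θ_0 + X^†(y − Xθ_0) (where X = [X_1 … X_D]) satisfies ‖θ*_{Δ_i} − θ_{0,Δ_i}‖² ≥ 2 μ_i L(θ_0)/L², where μ_i = σ_min(X_i)², L = ‖X‖². -/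
open Matrix

/-- For the block least-squares problem, the minimum-Euclidean-norm interpolating solution
moves each block by at least `2 μᵢ L(θ₀)/L²`, where `μᵢ = σ_min(Xᵢ)²` and `L = ‖X‖²`. -/
theorem min_norm_block_movement_lower_bound {n p D : ℕ}
    (X : Matrix (Fin n) (Fin p) ℝ) (y : Fin n → ℝ) (θ0 : Fin p → ℝ)
    (Δ : Fin D → Finset (Fin p))
    (hdisj : ∀ i j, i ≠ j → Disjoint (Δ i) (Δ j))
    (hcover : ∀ k : Fin p, ∃ i, k ∈ Δ i)
    (μ : Fin D → ℝ) (L : ℝ) (hμpos : ∀ i, 0 < μ i) (hLpos : 0 < L)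
    -- `μ i ≤ σ_min(Xᵢ)²` as a quadratic-form lower bound (full row rank of each block):
    (hμ : ∀ i (v : Fin n → ℝ),
      μ i * ∑ k, (v k) ^ 2 ≤ ∑ j ∈ Δ i, (∑ k, X k j * v k) ^ 2)
    -- `L = ‖X‖²` as a quadratic-form upper bound:
    (hL : ∀ w : Fin p → ℝ, ∑ k, (X.mulVec w k) ^ 2 ≤ L * ∑ j, (w j) ^ 2)
    (hinv : IsUnit (X * X.transpose).det)
    (i : Fin D) :
    let Lloss : (Fin p → ℝ) → ℝ := fun θ => (1 / 2) * ∑ k, (y k - X.mulVec θ k) ^ 2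
    let θstar : Fin p → ℝ :=
      θ0 + X.transpose.mulVec ((X * X.transpose)⁻¹.mulVec (y - X.mulVec θ0))
    2 * μ i * Lloss θ0 / L ^ 2 ≤ ∑ j ∈ Δ i, (θstar j - θ0 j) ^ 2 := by
  intro Lloss θstar
  set r : Fin n → ℝ := y - X.mulVec θ0 with hr
  set v : Fin n → ℝ := (X * X.transpose)⁻¹.mulVec r with hv
  have hdiff : ∀ j, θstar j - θ0 j = X.transpose.mulVec v j := by
    intro j
    simp [θstar, hv, hr]
  have key : X.mulVec (X.transpose.mulVec v) = r := by
    rw [Matrix.mulVec_mulVec, hv, Matrix.mulVec_mulVec, Matrix.mul_nonsing_inv _ hinv,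
      Matrix.one_mulVec]
  set A : ℝ := ∑ k, (v k) ^ 2 with hA
  set R : ℝ := ∑ k, (r k) ^ 2 with hR
  set B : ℝ := ∑ j ∈ Δ i, (∑ k, X k j * v k) ^ 2 with hB
  set T : ℝ := ∑ j, (X.transpose.mulVec v j) ^ 2 with hT
  have hAnn : 0 ≤ A := Finset.sum_nonneg fun k _ => sq_nonneg _
  have hRnn : 0 ≤ R := Finset.sum_nonneg fun k _ => sq_nonneg _
  have hBnn : 0 ≤ B := Finset.sum_nonneg fun k _ => sq_nonneg _
  have hTnn : 0 ≤ T := Finset.sum_nonneg fun k _ => sq_nonneg _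
  -- T = ⟨v, r⟩
  have hTvr : T = ∑ k, v k * r k := by
    have h1 : (X.transpose.mulVec v) ⬝ᵥ (X.transpose.mulVec v) = v ⬝ᵥ X.mulVec (X.transpose.mulVec v) := by
      rw [Matrix.mulVec_transpose, ← Matrix.dotProduct_mulVec]
    rw [key] at h1
    have h2 : (X.transpose.mulVec v) ⬝ᵥ (X.transpose.mulVec v) = T := by
      simp [hT, dotProduct, sq]
    rw [h2] at h1
    simpa [dotProduct] using h1
  -- R ≤ L * T
  have hRLT : R ≤ L * T := by
    have := hL (X.transpose.mulVec v)
    rwa [key] at this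
  -- Cauchy-Schwarz : T^2 ≤ A * R
  have hCS : T ^ 2 ≤ A * R := by
    rw [hTvr]
    exact Finset.sum_mul_sq_le_sq_mul_sq _ _ _
  -- R ≤ L^2 * A
  have hRA : R ≤ L ^ 2 * A := by
    rcases eq_or_lt_of_le hRnn with h0 | h0
    · nlinarith
    · nlinarith [mul_le_mul_of_nonneg_left hRLT hRnn, mul_le_mul_of_nonneg_left hCS (sq_nonneg L)]
  have hμA : μ i * A ≤ B := hμ i v
  have hBloss : ∑ j ∈ Δ i, (θstar j - θ0 j) ^ 2 = B := by
    apply Finset.sum_congr rfl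
    intro j _
    rw [hdiff j]
    congr 1
  have hLloss : Lloss θ0 = (1 / 2) * R := by
    simp [Lloss, hR, hr, Pi.sub_apply]
  rw [hBloss, hLloss, div_le_iff₀ (by positivity : (0:ℝ) < L ^ 2)]
  have hμi := (hμpos i).le
  nlinarith [mul_le_mul_of_nonneg_left hRA hμi]
end

section
/- In the setting of the previous statement, the pruned vector θ^p which agrees with the minimum-norm solution θ* outside block Δ_i and with θ_0 on Δ_i satisfies L(θ^p) ≥ (μ_i/L)² · L(θ_0), where μ_i = σ_min(X_i)² and L = ‖X‖². -/
open Matrix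

set_option maxHeartbeats 1000000 in
/-- Pruning block `Δ i` of the minimum-norm interpolating solution (resetting it to `θ₀`)
incurs loss at least `(μᵢ/L)² L(θ₀)`, where `μᵢ = σ_min(Xᵢ)²` and `L = ‖X‖²`. -/
theorem pruned_block_loss_lower_bound {n p D : ℕ}
    (X : Matrix (Fin n) (Fin p) ℝ) (y : Fin n → ℝ) (θ0 : Fin p → ℝ)
    (Δ : Fin D → Finset (Fin p))
    (hdisj : ∀ i j, i ≠ j → Disjoint (Δ i) (Δ j))
    (hcover : ∀ k : Fin p, ∃ i, k ∈ Δ i)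
    (μ : Fin D → ℝ) (L : ℝ) (hμpos : ∀ i, 0 < μ i) (hLpos : 0 < L)
    (hμ : ∀ i (v : Fin n → ℝ),
      μ i * ∑ k, (v k) ^ 2 ≤ ∑ j ∈ Δ i, (∑ k, X k j * v k) ^ 2)
    (hL : ∀ w : Fin p → ℝ, ∑ k, (X.mulVec w k) ^ 2 ≤ L * ∑ j, (w j) ^ 2)
    (hinv : IsUnit (X * X.transpose).det)
    (i : Fin D) :
    let Lloss : (Fin p → ℝ) → ℝ := fun θ => (1 / 2) * ∑ k, (y k - X.mulVec θ k) ^ 2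
    let θstar : Fin p → ℝ :=
      θ0 + X.transpose.mulVec ((X * X.transpose)⁻¹.mulVec (y - X.mulVec θ0))
    let θp : Fin p → ℝ := fun j => if j ∈ Δ i then θ0 j else θstar j
    (μ i / L) ^ 2 * Lloss θ0 ≤ Lloss θp := by
  intro Lloss θstar θp
  classical
  set r : Fin n → ℝ := y - X.mulVec θ0 with hrdef
  set z : Fin n → ℝ := (X * X.transpose)⁻¹.mulVec r with hzdef
  set u : Fin p → ℝ := X.transpose.mulVec z with hudef
  have hru : X.mulVec u = r := by
    rw [hudef, Matrix.mulVec_mulVec, hzdef, Matrix.mulVec_mulVec,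
      Matrix.mul_nonsing_inv _ hinv, Matrix.one_mulVec]
  have hstar : θstar = θ0 + u := rfl
  set w : Fin p → ℝ := fun j => if j ∈ Δ i then u j else 0 with hwdef
  have hkey : ∀ k, y k - X.mulVec θp k = X.mulVec w k := by
    intro k
    have hXstar : X.mulVec θstar = y := by
      rw [hstar, Matrix.mulVec_add, hru, hrdef]
      funext k; simp [Pi.add_apply, Pi.sub_apply]
    have hsub : θstar - θp = w := by
      funext j
      show θstar j - (if j ∈ Δ i then θ0 j else θstar j) = w j
      by_cases h : j ∈ Δ i
      · simp [h, hwdef, hstar, Pi.add_apply]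
      · simp [h, hwdef]
    calc y k - X.mulVec θp k = X.mulVec θstar k - X.mulVec θp k := by rw [hXstar]
      _ = X.mulVec (θstar - θp) k := by
          simp [Matrix.mulVec, dotProduct, Pi.sub_apply, ← Finset.sum_sub_distrib, mul_sub]
      _ = X.mulVec w k := by rw [hsub]
  set s : Fin n → ℝ := X.mulVec w with hsdef
  have hu' : ∀ j, u j = ∑ k, X k j * z k := by
    intro j; simp [hudef, Matrix.mulVec, dotProduct, Matrix.transpose_apply]
  -- scalar quantities
  set Z := ∑ k, (z k) ^ 2 with hZ
  set R := ∑ k, (r k) ^ 2 with hR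
  set U := ∑ j, (u j) ^ 2 with hU
  set S := ∑ k, (s k) ^ 2 with hS
  set T := ∑ j ∈ Δ i, (u j) ^ 2 with hT
  -- ⟨z, s⟩ = T
  have hzs : ∑ k, z k * s k = T := by
    have : ∑ k, z k * s k = ∑ j, (∑ k, X k j * z k) * w j := by
      simp only [hsdef, Matrix.mulVec, dotProduct, Finset.mul_sum, Finset.sum_mul]
      rw [Finset.sum_comm]
      apply Finset.sum_congr rfl; intro j _
      apply Finset.sum_congr rfl; intro k _; ring
    rw [this, hT]
    rw [show ∑ j, (∑ k, X k j * z k) * w j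
        = ∑ j, (if j ∈ Δ i then (u j) ^ 2 else 0) from by
      apply Finset.sum_congr rfl; intro j _
      by_cases h : j ∈ Δ i <;> simp [hwdef, h, hu' j, sq]]
    rw [Finset.sum_ite_mem, Finset.univ_inter]
  -- ⟨z, r⟩ = U
  have hzr : ∑ k, z k * r k = U := by
    have : ∑ k, z k * r k = ∑ j, (∑ k, X k j * z k) * u j := by
      rw [← hru]
      simp only [Matrix.mulVec, dotProduct, Finset.mul_sum]
      rw [Finset.sum_comm]
      apply Finset.sum_congr rfl; intro j _
      rw [Finset.sum_mul]
      apply Finset.sum_congr rfl; intro k _; ring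
    rw [this, hU]
    apply Finset.sum_congr rfl; intro j _
    rw [← hu' j, sq]
  -- inequalities
  have hμZ : μ i * Z ≤ T := by
    have := hμ i z
    rw [hT]
    calc μ i * Z = μ i * ∑ k, (z k) ^ 2 := rfl
      _ ≤ ∑ j ∈ Δ i, (∑ k, X k j * z k) ^ 2 := this
      _ = ∑ j ∈ Δ i, (u j) ^ 2 := by
          apply Finset.sum_congr rfl; intro j _; rw [hu' j]
  have hCS1 : T ^ 2 ≤ Z * S := by
    rw [← hzs]; exact Finset.sum_mul_sq_le_sq_mul_sq _ _ _
  have hCS2 : U ^ 2 ≤ Z * R := by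
    rw [← hzr]; exact Finset.sum_mul_sq_le_sq_mul_sq _ _ _
  have hRLU : R ≤ L * U := by
    have := hL u
    rw [hru] at this
    exact this
  have hZ0 : 0 ≤ Z := Finset.sum_nonneg fun _ _ => sq_nonneg _
  have hR0 : 0 ≤ R := Finset.sum_nonneg fun _ _ => sq_nonneg _
  have hU0 : 0 ≤ U := Finset.sum_nonneg fun _ _ => sq_nonneg _
  have hS0 : 0 ≤ S := Finset.sum_nonneg fun _ _ => sq_nonneg _
  have hμi := hμpos i
  -- R ≤ L² Z
  have h1 : R ≤ L ^ 2 * Z := by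
    rcases eq_or_lt_of_le hU0 with hUeq | hUpos
    · have : R ≤ 0 := by rw [← hUeq] at hRLU; simpa using hRLU
      nlinarith
    · have hULZ : U ≤ L * Z := by nlinarith
      nlinarith
  -- μ² Z ≤ S
  have h2 : μ i ^ 2 * Z ≤ S := by
    rcases eq_or_lt_of_le hZ0 with hZeq | hZpos
    · rw [← hZeq]; nlinarith
    · nlinarith [mul_self_le_mul_self (by positivity : (0:ℝ) ≤ μ i * Z) hμZ, hCS1, hZpos]
  -- finish
  have hLloss0 : Lloss θ0 = (1 / 2) * R := by
    show (1 / 2) * ∑ k, (y k - X.mulVec θ0 k) ^ 2 = _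
    rw [hR]; congr 1
  have hLlossp : Lloss θp = (1 / 2) * S := by
    show (1 / 2) * ∑ k, (y k - X.mulVec θp k) ^ 2 = _
    rw [hS]
    congr 1
    apply Finset.sum_congr rfl; intro k _
    rw [hkey k]
  rw [hLloss0, hLlossp, div_pow, div_mul_eq_mul_div, div_le_iff₀ (by positivity)]
  nlinarith [mul_le_mul_of_nonneg_left h1 (le_of_lt (mul_pos hμi hμi)),
    mul_le_mul_of_nonneg_left h2 (le_of_lt (mul_pos hLpos hLpos))]
end

section
/- Let L_Λ(θ) = E[(y − θ^T Λx)²] be the population least-squares loss for scaled features Λx with Λ an invertible diagonal p×p matrix, where (x,y) has finite second moments, Σ = E[xx^T] is invertible, and b = E[xy]. Then the population minimizer is θ̄^Λ = Λ^{-1}Σ^{-1}b, and the natural importance I^N_Δ(θ̄^Λ) = L_Λ(θ̄^Λ_{\bar Δ}) − L_Λ(θ̄^Λ) does not depend on Λ for any index set Δ ⊆ [p]. -/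
open Matrix

/-- For the population least-squares loss with diagonally scaled features,
`θ̄^Λ = Λ⁻¹ Σ⁻¹ b` is the population minimizer, and the natural importance
`I^N_Δ(θ̄^Λ) = L_Λ(θ̄^Λ_{Δ̄}) - L_Λ(θ̄^Λ)` is independent of the scaling `Λ`. -/
theorem natural_importance_scaling_invariant {p : ℕ}
    (Sig : Matrix (Fin p) (Fin p) ℝ) (hSig : Sig.PosDef)
    (b : Fin p → ℝ) (c : ℝ)
    (d : Fin p → ℝ) (hd : ∀ i, d i ≠ 0) (Δ : Finset (Fin p)) :
    -- `L_Λ(θ) = E[y²] - 2(Λb)ᵀθ + θᵀ Λ Σ Λ θ`, with `c = E[y²]`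
    let Lfun : Matrix (Fin p) (Fin p) ℝ → (Fin p → ℝ) → ℝ := fun Lam θ =>
      c - 2 * (Lam.mulVec b ⬝ᵥ θ) + θ ⬝ᵥ ((Lam * Sig * Lam).mulVec θ)
    let Λ : Matrix (Fin p) (Fin p) ℝ := Matrix.diagonal d
    let θbar : Fin p → ℝ := Sig⁻¹.mulVec b
    let θbarΛ : Fin p → ℝ := (Matrix.diagonal fun i => (d i)⁻¹).mulVec θbar
    let prune : (Fin p → ℝ) → (Fin p → ℝ) := fun θ j => if j ∈ Δ then 0 else θ j
    (∀ θ : Fin p → ℝ, Lfun Λ θbarΛ ≤ Lfun Λ θ) ∧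
      Lfun Λ (prune θbarΛ) - Lfun Λ θbarΛ = Lfun 1 (prune θbar) - Lfun 1 θbar := by
  intro Lfun Λ θbar θbarΛ prune
  have hdet : IsUnit Sig.det := isUnit_iff_ne_zero.mpr hSig.det_pos.ne'
  set Dinv : Matrix (Fin p) (Fin p) ℝ := Matrix.diagonal (fun i => (d i)⁻¹) with hDinv
  have hΛDinv : Λ * Dinv = 1 := by
    rw [hDinv, Matrix.diagonal_mul_diagonal,
      show (fun i => d i * (d i)⁻¹) = fun _ => (1:ℝ) from funext fun i => mul_inv_cancel₀ (hd i),
      Matrix.diagonal_one]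
  -- key : Lfun Λ (Dinv *ᵥ v) = Lfun 1 v
  have hlin : ∀ v : Fin p → ℝ, Λ.mulVec b ⬝ᵥ Dinv.mulVec v = b ⬝ᵥ v := by
    intro v
    simp only [dotProduct, Λ, hDinv, Matrix.mulVec_diagonal]
    refine Finset.sum_congr rfl fun i _ => ?_
    rw [show d i * b i * ((d i)⁻¹ * v i) = b i * v i * (d i * (d i)⁻¹) by ring,
      mul_inv_cancel₀ (hd i), mul_one]
  have hΛD : ∀ v : Fin p → ℝ, Λ.mulVec (Dinv.mulVec v) = v := by
    intro v; rw [Matrix.mulVec_mulVec, hΛDinv, Matrix.one_mulVec]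
  have hquad : ∀ v : Fin p → ℝ,
      Dinv.mulVec v ⬝ᵥ (Λ * Sig * Λ).mulVec (Dinv.mulVec v) = v ⬝ᵥ Sig.mulVec v := by
    intro v
    have h1 : (Λ * Sig * Λ).mulVec (Dinv.mulVec v) = Λ.mulVec (Sig.mulVec v) := by
      rw [← Matrix.mulVec_mulVec, ← Matrix.mulVec_mulVec, hΛD, Matrix.mulVec_mulVec]
    rw [h1]
    simp only [dotProduct, Λ, hDinv, Matrix.mulVec_diagonal]
    refine Finset.sum_congr rfl fun i _ => ?_
    rw [show (d i)⁻¹ * v i * (d i * (Sig.mulVec v) i)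
        = v i * (Sig.mulVec v) i * (d i * (d i)⁻¹) by ring,
      mul_inv_cancel₀ (hd i), mul_one]
  have key : ∀ v : Fin p → ℝ, Lfun Λ (Dinv.mulVec v) = Lfun 1 v := by
    intro v
    simp only [Lfun, hlin, hquad, Matrix.one_mulVec, Matrix.one_mul, Matrix.mul_one]
  have hprune : prune θbarΛ = Dinv.mulVec (prune θbar) := by
    funext j
    simp only [prune, θbarΛ, hDinv, Matrix.mulVec_diagonal]
    split <;> simp
  constructor
  · -- minimization
    intro θ
    set M : Matrix (Fin p) (Fin p) ℝ := Λ * Sig * Λ with hM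
    have hMθ : M.mulVec θbarΛ = Λ.mulVec b := by
      show M.mulVec (Dinv.mulVec θbar) = _
      rw [Matrix.mulVec_mulVec, hM, Matrix.mul_assoc (Λ * Sig) Λ Dinv, hΛDinv,
        Matrix.mul_one, show θbar = Sig⁻¹.mulVec b from rfl, Matrix.mulVec_mulVec,
        Matrix.mul_assoc, Matrix.mul_nonsing_inv Sig hdet, Matrix.mul_one]
    have hSymm : Mᵀ = M := by
      have hs : Sigᵀ = Sig := hSig.isHermitian.eq
      rw [hM, Matrix.transpose_mul, Matrix.transpose_mul, hs]
      simp [Λ, Matrix.diagonal_transpose, Matrix.mul_assoc]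
    have hpsd : M.PosSemidef := by
      have := hSig.posSemidef.mul_mul_conjTranspose_same Λ
      have hΛH : Λᴴ = Λ := by simp [Λ, Matrix.diagonal_conjTranspose]
      rwa [hΛH] at this
    have hsymdot : ∀ u w : Fin p → ℝ, u ⬝ᵥ M.mulVec w = w ⬝ᵥ M.mulVec u := by
      intro u w
      rw [Matrix.dotProduct_mulVec, ← Matrix.mulVec_transpose, hSymm, dotProduct_comm]
    have hexp : Lfun Λ θ - Lfun Λ θbarΛ = (θ - θbarΛ) ⬝ᵥ M.mulVec (θ - θbarΛ) := by
      simp only [Lfun, ← hM, ← hMθ]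
      rw [Matrix.mulVec_sub, sub_dotProduct, dotProduct_sub,
        dotProduct_sub, dotProduct_comm (M.mulVec θbarΛ) θ,
        dotProduct_comm (M.mulVec θbarΛ) θbarΛ, hsymdot θbarΛ θ]
      ring
    have hnn : 0 ≤ (θ - θbarΛ) ⬝ᵥ M.mulVec (θ - θbarΛ) := by
      have := hpsd.dotProduct_mulVec_nonneg (θ - θbarΛ)
      simpa using this
    linarith [hexp ▸ hnn]
  · have h1 : Lfun Λ θbarΛ = Lfun 1 θbar := key θbar
    have h2 : Lfun Λ (prune θbarΛ) = Lfun 1 (prune θbar) := by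
      rw [hprune]; exact key (prune θbar)
    rw [h1, h2]
end

section
/- For the two-layer ReLU network loss with twice-differentiable ℓ (and assuming no activation lies exactly at the kink), the output-layer partial Hessian scales as λ²: ∂²L/∂V²(θ^λ) = λ² ∂²L/∂V²(θ^1). Consequently, the Hessian-based importance of the output layer I^H_{Δ_V}(θ^λ) = Σ_{i∈Δ_V} H(θ^λ)_{ii}(θ^λ_i)² is independent of λ. -/
/-- For the two-layer ReLU loss with a `C²` per-sample loss, the output-layer partial Hessian
scales as `λ²` along the family `θ^λ = (λW, λ⁻¹V)`; consequently the Hessian-based importance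
of the output layer is independent of `λ`. -/
theorem output_hessian_scaling_and_HI_invariance {m d K n : ℕ}
    (W : Fin m → Fin d → ℝ) (V : Fin K → Fin m → ℝ)
    (x : Fin n → Fin d → ℝ) (y : Fin n → Fin K → ℝ)
    (ℓ : (Fin K → ℝ) → (Fin K → ℝ) → ℝ)
    (hℓ : ∀ yv, ContDiff ℝ 2 (ℓ yv))
    (lam : ℝ) (hlam : 0 < lam) :
    let Lloss : (Fin m → Fin d → ℝ) → (Fin K → Fin m → ℝ) → ℝ := fun W' V' =>
      (1 / (n : ℝ)) *
        ∑ s, ℓ (y s) (fun k => ∑ i, V' k i * max (∑ j, W' i j * x s j) 0)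
    let e : Fin K → Fin m → (Fin K → Fin m → ℝ) := fun k i => Pi.single k (Pi.single i 1)
    (∀ A B : Fin K → Fin m → ℝ,
        iteratedFDeriv ℝ 2 (fun V' => Lloss (lam • W) V') (lam⁻¹ • V) ![A, B] =
          lam ^ 2 * iteratedFDeriv ℝ 2 (fun V' => Lloss W V') V ![A, B]) ∧
      (∑ k, ∑ i,
          iteratedFDeriv ℝ 2 (fun V' => Lloss (lam • W) V') (lam⁻¹ • V) ![e k i, e k i] *
            ((lam⁻¹ • V) k i) ^ 2) =
        ∑ k, ∑ i,
          iteratedFDeriv ℝ 2 (fun V' => Lloss W V') V ![e k i, e k i] * (V k i) ^ 2 := by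
  intro Lloss e
  have hne : lam ≠ 0 := ne_of_gt hlam
  -- the inner (linear-in-V') map is smooth
  have hf : ContDiff ℝ 2 (fun V' => Lloss W V') := by
    apply ContDiff.mul contDiff_const
    apply ContDiff.sum
    intro s _
    apply (hℓ (y s)).comp
    apply contDiff_pi.2
    intro k
    apply ContDiff.sum
    intro i _
    exact ((contDiff_apply_apply ℝ ℝ k i).mul contDiff_const)
  -- Lloss with scaled W equals Lloss with scaled V'
  have hkey : (fun V' => Lloss (lam • W) V') =
      (fun V' => Lloss W V') ∘ (lam • ContinuousLinearMap.id ℝ (Fin K → Fin m → ℝ)) := by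
    funext V'
    simp only [Function.comp, ContinuousLinearMap.smul_apply, ContinuousLinearMap.id_apply,
      Lloss]
    congr 1
    apply Finset.sum_congr rfl
    intro s _
    congr 1
    funext k
    apply Finset.sum_congr rfl
    intro i _
    have : max (∑ j, (lam • W) i j * x s j) 0 = lam * max (∑ j, W i j * x s j) 0 := by
      simp only [Pi.smul_apply, smul_eq_mul, mul_assoc, ← Finset.mul_sum]
      rw [mul_max_of_nonneg _ _ (le_of_lt hlam), mul_zero]
    rw [this]
    simp [Pi.smul_apply, smul_eq_mul]
    ring
  have hmain : ∀ A B : Fin K → Fin m → ℝ,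
      iteratedFDeriv ℝ 2 (fun V' => Lloss (lam • W) V') (lam⁻¹ • V) ![A, B] =
        lam ^ 2 * iteratedFDeriv ℝ 2 (fun V' => Lloss W V') V ![A, B] := by
    intro A B
    set g : (Fin K → Fin m → ℝ) →L[ℝ] (Fin K → Fin m → ℝ) :=
      lam • ContinuousLinearMap.id ℝ (Fin K → Fin m → ℝ) with hg
    have hgV : g (lam⁻¹ • V) = V := by
      simp [hg, smul_smul, mul_inv_cancel₀ hne, inv_mul_cancel₀ hne]
    rw [hkey, g.iteratedFDeriv_comp_right hf _ le_rfl, hgV,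
      ContinuousMultilinearMap.compContinuousLinearMap_apply]
    have : (fun i : Fin 2 => g (![A, B] i)) = fun i : Fin 2 => lam • (![A, B] i) := by
      funext i; simp [hg]
    rw [this,
      (iteratedFDeriv ℝ 2 (fun V' => Lloss W V') V).map_smul_univ (fun _ : Fin 2 => lam)]
    simp [smul_eq_mul, pow_two]
  refine ⟨hmain, ?_⟩
  apply Finset.sum_congr rfl
  intro k _
  apply Finset.sum_congr rfl
  intro i _
  rw [hmain]
  simp only [Pi.smul_apply, smul_eq_mul]
  field_simp
end

section
/- Let Φ_S and φ_S be two random objectives indexed by closed sets S ⊆ R^p satisfying: (i) P(Φ_S < t) ≤ 2P(φ_S ≤ t) for every closed S and every t; let M be the set of global minimizers of Φ over R^p. Then for any closed set S, P(M ⊆ S^c) ≥ 1 − 2 min_t [P(φ_{R^p} ≥ t) + P(φ_S ≤ t)], provided additionally that P(Φ_{R^p} > t) ≤ 2P(φ_{R^p} ≥ t) for all t. -/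
open MeasureTheory

/-- CGMT-style localization of the global minima: if `P(Φ_S < t) ≤ 2P(φ_S ≤ t)` for every
closed `S` and `P(Φ_{ℝ^p} > t) ≤ 2P(φ_{ℝ^p} ≥ t)`, then for every closed `S` and every `t`,
`P(M ⊆ Sᶜ) ≥ 1 - 2(P(φ_{ℝ^p} ≥ t) + P(φ_S ≤ t))`. -/
theorem minima_localization {p : ℕ} {Ω : Type*} [MeasurableSpace Ω]
    (P : Measure Ω) [IsProbabilityMeasure P]
    (LPO : (Fin p → ℝ) → Ω → ℝ)
    (φ : Set (Fin p → ℝ) → Ω → ℝ)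
    (hbdd : ∀ ω, BddBelow (Set.range fun w => LPO w ω)) :
    let Φ : Set (Fin p → ℝ) → Ω → ℝ := fun S ω => sInf ((fun w => LPO w ω) '' S)
    let M : Ω → Set (Fin p → ℝ) := fun ω => {w | LPO w ω = Φ Set.univ ω}
    (∀ S : Set (Fin p → ℝ), Measurable (Φ S)) →
    (∀ S : Set (Fin p → ℝ), Measurable (φ S)) →
    (∀ S : Set (Fin p → ℝ), IsClosed S → ∀ t : ℝ,
        P {ω | Φ S ω < t} ≤ 2 * P {ω | φ S ω ≤ t}) →
    (∀ t : ℝ, P {ω | Φ Set.univ ω > t} ≤ 2 * P {ω | φ Set.univ ω ≥ t}) →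
    ∀ S : Set (Fin p → ℝ), IsClosed S → ∀ t : ℝ,
      1 - 2 * (P {ω | φ Set.univ ω ≥ t} + P {ω | φ S ω ≤ t}) ≤ P {ω | M ω ⊆ Sᶜ} := by
  intro Φ M hΦm hφm hcomp hcomp' S hS t
  set A := P {ω | φ Set.univ ω ≥ t} with hA
  set B := P {ω | φ S ω ≤ t} with hB
  set s : ℕ → Set Ω := fun n => {ω | φ S ω ≤ t + 1 / (n + 1)} with hs
  have key : ∀ n : ℕ, P {ω | ¬ M ω ⊆ Sᶜ} ≤ 2 * A + 2 * P (s n) := by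
    intro n
    have hsub : {ω | ¬ M ω ⊆ Sᶜ} ⊆
        {ω | Φ Set.univ ω > t} ∪ {ω | Φ S ω < t + 1 / (n + 1)} := by
      intro ω hω
      simp only [Set.mem_setOf_eq, Set.not_subset] at hω
      obtain ⟨w, hwM, hwS⟩ := hω
      simp only [Set.mem_compl_iff, not_not] at hwS
      by_cases h : t < Φ Set.univ ω
      · exact Or.inl h
      · push_neg at h
        right
        have hbS : BddBelow ((fun w => LPO w ω) '' S) :=
          (hbdd ω).mono (Set.image_subset_range _ _)
        have h1 : Φ S ω ≤ LPO w ω := csInf_le hbS ⟨w, hwS, rfl⟩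
        have hpos : (0 : ℝ) < 1 / (n + 1) := by positivity
        have h2 : LPO w ω = Φ Set.univ ω := hwM
        show Φ S ω < t + 1 / (n + 1)
        calc Φ S ω ≤ LPO w ω := h1
          _ = Φ Set.univ ω := h2
          _ ≤ t := h
          _ < t + 1 / (n + 1) := by linarith
    calc P {ω | ¬ M ω ⊆ Sᶜ}
        ≤ P ({ω | Φ Set.univ ω > t} ∪ {ω | Φ S ω < t + 1 / (n + 1)}) :=
          measure_mono hsub
      _ ≤ P {ω | Φ Set.univ ω > t} + P {ω | Φ S ω < t + 1 / (n + 1)} :=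
          measure_union_le _ _
      _ ≤ 2 * A + 2 * P (s n) := add_le_add (hcomp' t) (hcomp S hS _)
  have hinter : (⋂ n : ℕ, s n) = {ω | φ S ω ≤ t} := by
    ext ω
    simp only [hs, Set.mem_iInter, Set.mem_setOf_eq]
    constructor
    · intro h
      by_contra hlt
      push_neg at hlt
      obtain ⟨n, hn⟩ := exists_nat_one_div_lt (sub_pos.mpr hlt)
      have := h n
      linarith
    · intro h n
      have h0 : (0 : ℝ) ≤ 1 / (n + 1) := by positivity
      linarith
  have hmeasn : ∀ n : ℕ, NullMeasurableSet (s n) P := fun n =>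
    ((hφm S) measurableSet_Iic).nullMeasurableSet
  have hanti : Antitone s := by
    intro m n hmn ω hω
    simp only [hs, Set.mem_setOf_eq] at hω ⊢
    have h1 : (1 : ℝ) / (n + 1) ≤ 1 / (m + 1) := by
      apply one_div_le_one_div_of_le
      · positivity
      · exact_mod_cast Nat.succ_le_succ hmn
    linarith
  have htend : Filter.Tendsto (fun n => P (s n)) Filter.atTop (nhds B) := by
    have := MeasureTheory.tendsto_measure_iInter_atTop hmeasn hanti ⟨0, measure_ne_top P _⟩
    rwa [hinter] at this
  have htend2 : Filter.Tendsto (fun n => 2 * A + 2 * P (s n)) Filter.atTop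
      (nhds (2 * A + 2 * B)) := by
    apply Filter.Tendsto.const_add
    exact ENNReal.Tendsto.const_mul htend (Or.inr (by norm_num))
  have hmain : P {ω | ¬ M ω ⊆ Sᶜ} ≤ 2 * A + 2 * B := ge_of_tendsto' htend2 key
  have hcover : (1 : ENNReal) ≤ P {ω | M ω ⊆ Sᶜ} + P {ω | ¬ M ω ⊆ Sᶜ} := by
    have : {ω | M ω ⊆ Sᶜ} ∪ {ω | ¬ M ω ⊆ Sᶜ} = Set.univ := by
      ext ω; simp [Set.mem_union, em]
    calc (1 : ENNReal) = P Set.univ := (measure_univ (μ := P)).symm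
      _ = P ({ω | M ω ⊆ Sᶜ} ∪ {ω | ¬ M ω ⊆ Sᶜ}) := by rw [this]
      _ ≤ _ := measure_union_le _ _
  rw [tsub_le_iff_right]
  calc (1 : ENNReal) ≤ P {ω | M ω ⊆ Sᶜ} + P {ω | ¬ M ω ⊆ Sᶜ} := hcover
    _ ≤ P {ω | M ω ⊆ Sᶜ} + (2 * A + 2 * B) := by gcongr
    _ = P {ω | M ω ⊆ Sᶜ} + 2 * (A + B) := by ring
end
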